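/- Let A ∈ ℂ^{n×n×n×n} be a conjugate partial-symmetric (CPS) tensor. Then there exist r ∈ ℕ, real numbers λ_1,…,λ_r, and symmetric matrices E_1,…,E_r ∈ ℂ^{n×n} with ⟨E_i,E_j⟩ = δ_ij for all i,j, such that A = Σ_{i=1}^r λ_i E_i∘conj(E_i), i.e., A_{ijkl} = Σ_{t=1}^r λ_t (E_t)_{ij} conj((E_t)_{kl}) for all indices. -/

import Mathlib

open scoped BigOperators
open Matrix

/-- A fourth-order complex tensor is conjugate partial-symmetric (CPS). -/
def IsCPS {n : ℕ} (A : Fin n → Fin n → Fin n → Fin n → ℂ) : Prop :=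
  ∀ i j k l, A i j k l = A j i k l ∧ A i j k l = A i j l k ∧
    A i j k l = starRingEnd ℂ (A k l i j)

/-- Every CPS tensor admits an orthonormal symmetric matrix outer product
decomposition `A = Σ λ_t E_t ∘ conj(E_t)` with real `λ_t`. -/
theorem cps_matrix_outer_decomposition {n : ℕ}
    (A : Fin n → Fin n → Fin n → Fin n → ℂ) (hA : IsCPS A) :
    ∃ (r : ℕ) (lam : Fin r → ℝ) (E : Fin r → Matrix (Fin n) (Fin n) ℂ),
      (∀ t, (E t).IsSymm) ∧
      (∀ s t, (∑ i, ∑ j, E s i j * starRingEnd ℂ (E t i j)) =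
        if s = t then 1 else 0) ∧
      (∀ i j k l, A i j k l =
        ∑ t, (lam t : ℂ) * E t i j * starRingEnd ℂ (E t k l)) := by
  classical
  -- Flatten `A` into a matrix on pairs of indices.
  set M : Matrix (Fin n × Fin n) (Fin n × Fin n) ℂ :=
    Matrix.of (fun p q => A p.1 p.2 q.1 q.2) with hMdef
  have hHerm : M.IsHermitian := by
    ext p q
    simp only [Matrix.conjTranspose_apply, hMdef, Matrix.of_apply]
    exact (RingHom.congr_arg (starRingEnd ℂ) ((hA q.1 q.2 p.1 p.2).2.2)).trans
      (by simp [Complex.conj_conj])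
  set lam0 : Fin n × Fin n → ℝ := hHerm.eigenvalues with hlam0
  set v : Fin n × Fin n → EuclideanSpace ℂ (Fin n × Fin n) :=
    fun t => hHerm.eigenvectorBasis t with hv
  -- Entrywise spectral decomposition.
  have key : ∀ p q, M p q =
      ∑ t, (lam0 t : ℂ) * v t p * (starRingEnd ℂ) (v t q) := by
    intro p q
    conv_lhs => rw [hHerm.spectral_theorem, Unitary.conjStarAlgAut_apply]
    rw [Matrix.mul_apply]
    refine Finset.sum_congr rfl fun t _ => ?_
    rw [Matrix.mul_diagonal]
    simp only [Matrix.star_apply, Matrix.IsHermitian.eigenvectorUnitary_apply,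
      Function.comp_apply, RCLike.star_def, hv, hlam0,
      Complex.coe_algebraMap]
    ring
  -- Eigenvectors with nonzero eigenvalues are symmetric matrices.
  have hveig : ∀ t, M *ᵥ (v t) = (lam0 t) • (v t) := fun t =>
    hHerm.mulVec_eigenvectorBasis t
  have hsym : ∀ t, lam0 t ≠ 0 → ∀ i j, v t (i, j) = v t (j, i) := by
    intro t ht i j
    have h1 : ∀ a b : Fin n, (M *ᵥ (v t)) (a, b) = (M *ᵥ (v t)) (b, a) := by
      intro a b
      simp only [Matrix.mulVec, dotProduct]
      refine Finset.sum_congr rfl fun q _ => ?_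
      simp only [hMdef, Matrix.of_apply]
      rw [(hA a b q.1 q.2).1]
    have h2 := h1 i j
    rw [hveig t] at h2
    have h3 : (lam0 t : ℂ) * v t (i, j) = (lam0 t : ℂ) * v t (j, i) := by
      simpa [Pi.smul_apply, smul_eq_mul] using h2
    have hne : (lam0 t : ℂ) ≠ 0 := by exact_mod_cast ht
    exact mul_left_cancel₀ hne h3
  -- Orthonormality.
  have horth : ∀ s t : Fin n × Fin n,
      (∑ p : Fin n × Fin n, v s p * (starRingEnd ℂ) (v t p)) =
        if s = t then 1 else 0 := by
    intro s t
    have := orthonormal_iff_ite.mp hHerm.eigenvectorBasis.orthonormal t s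
    rw [PiLp.inner_apply] at this
    simp only [RCLike.inner_apply] at this
    calc (∑ p : Fin n × Fin n, v s p * (starRingEnd ℂ) (v t p))
        = ∑ p : Fin n × Fin n, (starRingEnd ℂ) (v t p) * v s p := by
          refine Finset.sum_congr rfl fun p _ => mul_comm _ _
      _ = if t = s then 1 else 0 := (Finset.sum_congr rfl fun p _ => mul_comm _ _).trans this
      _ = if s = t then 1 else 0 := by simp [eq_comm]
  -- Keep only nonzero eigenvalues.
  set r : ℕ := Fintype.card {t : Fin n × Fin n // lam0 t ≠ 0} with hr
  set e : {t : Fin n × Fin n // lam0 t ≠ 0} ≃ Fin r := Fintype.equivFin _ with he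
  set f : Fin r → Fin n × Fin n := fun i => (e.symm i : Fin n × Fin n) with hf
  have hfprop : ∀ i, lam0 (f i) ≠ 0 := fun i => (e.symm i).2
  have hfinj : Function.Injective f :=
    Subtype.val_injective.comp (Equiv.injective e.symm)
  refine ⟨r, fun i => lam0 (f i),
    fun i => Matrix.of (fun a b => v (f i) (a, b)), ?_, ?_, ?_⟩
  · intro t
    ext a b
    simp only [Matrix.transpose_apply, Matrix.of_apply]
    exact hsym (f t) (hfprop t) b a
  · intro s t
    have h1 : (∑ p : Fin n × Fin n, v (f s) p * (starRingEnd ℂ) (v (f t) p))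
        = ∑ i, ∑ j, v (f s) (i, j) * (starRingEnd ℂ) (v (f t) (i, j)) :=
      Fintype.sum_prod_type (fun p => v (f s) p * (starRingEnd ℂ) (v (f t) p))
    simp only [Matrix.of_apply]
    rw [← h1, horth (f s) (f t)]
    by_cases h : s = t
    · simp [h]
    · rw [if_neg (fun hc => h (hfinj hc)), if_neg h]
  · intro i j k l
    have hM : A i j k l = M (i, j) (k, l) := rfl
    set g : Fin n × Fin n → ℂ :=
      fun t => (lam0 t : ℂ) * v t (i, j) * (starRingEnd ℂ) (v t (k, l)) with hg
    have hzero : ∀ t, lam0 t = 0 → g t = 0 := by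
      intro t ht; simp [hg, ht]
    have step1 : (∑ t, g t)
        = ∑ t ∈ Finset.univ.filter (fun t => lam0 t ≠ 0), g t :=
      by refine (Finset.sum_filter_of_ne ?_).symm
         exact fun t _ hgt h0 => hgt (hzero t h0)
    have step2 : (∑ t ∈ Finset.univ.filter (fun t => lam0 t ≠ 0), g t)
        = ∑ x : {t : Fin n × Fin n // lam0 t ≠ 0}, g x :=
      Finset.sum_subtype _ (fun t => by simp) g
    have step3 : (∑ x : {t : Fin n × Fin n // lam0 t ≠ 0}, g x)
        = ∑ a : Fin r, g (f a) :=
      (Equiv.sum_comp e.symm (fun x => g (x : Fin n × Fin n))).symm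
    rw [hM, key, step1, step2, step3]
    exact Finset.sum_congr rfl fun a _ => by simp [hg, Matrix.of_apply]
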